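/- With notation as before: if moreover each graded piece Gr^r(Fil^•) = Fil^r/Fil^{r+1} is p-torsion-free, then the natural map F̃ → M[1/p], induced on the copy of Fil^r in the colimit by x ↦ p^{-r}x, is injective, with image equal to ∑_{r∈ℤ} p^{-r} Fil^r ⊆ M[1/p]. -/

import Mathlib

open Pointwise
open scoped DirectSum

/-- The relations submodule presenting the colimit
`⋯ → Fil^{r+1} ←(·p)− Fil^{r+1} → Fil^r ←(·p)− Fil^r → Fil^{r-1} → ⋯`. -/
def filtColimRel (R : Type*) [CommRing R] (M : Type*) [AddCommGroup M] [Module R M]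
    (p : R) (Fil : ℤ → Submodule R M) :
    Submodule R (⨁ r : ℤ, ↥(Fil r)) :=
  Submodule.span R
    {z | ∃ (r : ℤ) (x : M) (_ : x ∈ Fil r) (hx' : x ∈ Fil (r - 1)) (hpx : p • x ∈ Fil r),
      z = DirectSum.lof R ℤ (fun r => ↥(Fil r)) r ⟨p • x, hpx⟩ -
        DirectSum.lof R ℤ (fun r => ↥(Fil r)) (r - 1) ⟨x, hx'⟩}

/-- The map `Fil^r → M[1/p]`, `x ↦ p^{-r} x`. -/
noncomputable def filtToLoc (R : Type*) [CommRing R] (M : Type*) [AddCommGroup M]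
    [Module R M] (p : R) (Fil : ℤ → Submodule R M) (r : ℤ) :
    ↥(Fil r) →ₗ[R] LocalizedModule (Submonoid.powers p) M :=
  p ^ (-r).toNat •
    (LocalizedModule.divBy (⟨p ^ r.toNat, r.toNat, rfl⟩ : Submonoid.powers p) ∘ₗ
      LocalizedModule.mkLinearMap (Submonoid.powers p) M ∘ₗ (Fil r).subtype)

/-- The induced map `⊕_r Fil^r → M[1/p]`. -/
noncomputable def filtSumToLoc (R : Type*) [CommRing R] (M : Type*) [AddCommGroup M]
    [Module R M] (p : R) (Fil : ℤ → Submodule R M) :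
    (⨁ r : ℤ, ↥(Fil r)) →ₗ[R] LocalizedModule (Submonoid.powers p) M :=
  DirectSum.toModule R ℤ _ (filtToLoc R M p Fil)

section Aux

variable {R : Type*} [CommRing R] {M : Type*} [AddCommGroup M] [Module R M]
  (p : R) (Fil : ℤ → Submodule R M)

lemma chain_mem (hanti : Antitone Fil)
    (htf : ∀ (r : ℤ) (x : M), x ∈ Fil r → p • x ∈ Fil (r + 1) → x ∈ Fil (r + 1))
    {t u : ℤ} (htu : t ≤ u) {x : M} (hx : x ∈ Fil t) (hpx : p • x ∈ Fil u) :
    x ∈ Fil u := by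
  obtain ⟨k, rfl⟩ : ∃ k : ℕ, u = t + k := ⟨(u - t).toNat, by omega⟩
  clear htu
  induction k with
  | zero => simpa using hx
  | succ k ih =>
      have e : (t + ((k : ℕ) + 1 : ℕ) : ℤ) = (t + k) + 1 := by push_cast; ring
      rw [e] at hpx ⊢
      exact htf (t + k) x (ih (hanti (by omega) hpx)) hpx

lemma ptf (hanti : Antitone Fil) (htop : ∀ r : ℤ, r ≤ 0 → Fil r = ⊤)
    (hbot : ∃ b : ℤ, ∀ r ≥ b, Fil r = ⊥)
    (htf : ∀ (r : ℤ) (x : M), x ∈ Fil r → p • x ∈ Fil (r + 1) → x ∈ Fil (r + 1))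
    (x : M) (hx : p • x = 0) : x = 0 := by
  obtain ⟨b, hb⟩ := hbot
  have h0 : x ∈ Fil 0 := by rw [htop 0 le_rfl]; trivial
  have h1 : x ∈ Fil (max b 0) :=
    chain_mem p Fil hanti htf (le_max_right _ _) h0 (by rw [hx]; exact zero_mem _)
  rw [hb (max b 0) (le_max_left _ _)] at h1
  simpa using h1

lemma pow_ptf (hanti : Antitone Fil) (htop : ∀ r : ℤ, r ≤ 0 → Fil r = ⊤)
    (hbot : ∃ b : ℤ, ∀ r ≥ b, Fil r = ⊥)
    (htf : ∀ (r : ℤ) (x : M), x ∈ Fil r → p • x ∈ Fil (r + 1) → x ∈ Fil (r + 1))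
    (n : ℕ) (x : M) (hx : p ^ n • x = 0) : x = 0 := by
  induction n generalizing x with
  | zero => simpa using hx
  | succ n ih =>
      rw [pow_succ, mul_comm, mul_smul, smul_comm] at hx
      exact ptf p Fil hanti htop hbot htf x (ih _ hx)

lemma mk_inj (hanti : Antitone Fil) (htop : ∀ r : ℤ, r ≤ 0 → Fil r = ⊤)
    (hbot : ∃ b : ℤ, ∀ r ≥ b, Fil r = ⊥)
    (htf : ∀ (r : ℤ) (x : M), x ∈ Fil r → p • x ∈ Fil (r + 1) → x ∈ Fil (r + 1))
    (x : M) (hx : LocalizedModule.mk (S := Submonoid.powers p) x 1 = 0) : x = 0 := by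
  have h0 : (0 : LocalizedModule (Submonoid.powers p) M) = LocalizedModule.mk 0 1 := by
    rw [← LocalizedModule.zero_mk 1]
  rw [h0, LocalizedModule.mk_eq] at hx
  obtain ⟨u, hu⟩ := hx
  obtain ⟨n, hn⟩ := u.2
  simp only [one_smul, smul_zero] at hu
  have : p ^ n • x = 0 := by
    have : (u : R) • x = 0 := hu
    rwa [← hn] at this
  exact pow_ptf p Fil hanti htop hbot htf n x this

end Aux

section Aux2

variable {R : Type*} [CommRing R] {M : Type*} [AddCommGroup M] [Module R M]
  (p : R) (Fil : ℤ → Submodule R M)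

lemma filtToLoc_apply (r : ℤ) (x : ↥(Fil r)) :
    filtToLoc R M p Fil r x =
      p ^ (-r).toNat •
        LocalizedModule.mk (S := Submonoid.powers p) (x : M) ⟨p ^ r.toNat, r.toNat, rfl⟩ := by
  simp [filtToLoc, LocalizedModule.divBy_apply, LocalizedModule.liftOn_mk,
    LocalizedModule.mkLinearMap_apply, one_mul, LocalizedModule.smul'_mk]

lemma scaled (r s : ℤ) (hrs : r ≤ s) (hs : 0 ≤ s) (x : ↥(Fil r)) :
    p ^ s.toNat • filtToLoc R M p Fil r x =
      LocalizedModule.mk (p ^ (s - r).toNat • (x : M)) 1 := by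
  rw [filtToLoc_apply, LocalizedModule.smul'_mk, LocalizedModule.smul'_mk,
    LocalizedModule.mk_eq]
  refine ⟨1, ?_⟩
  simp only [one_smul, one_mul, Submonoid.smul_def, smul_smul, ← pow_add]
  congr 2
  omega

end Aux2

section Aux3

variable {R : Type*} [CommRing R] {M : Type*} [AddCommGroup M] [Module R M]
  (p : R) (Fil : ℤ → Submodule R M)

lemma toModule_eq_sum {N : Type*} [AddCommGroup N] [Module R N]
    (φ : ∀ r : ℤ, ↥(Fil r) →ₗ[R] N) (z : ⨁ r : ℤ, ↥(Fil r)) (F : Finset ℤ)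
    (hF : ∀ r : ℤ, z r ≠ 0 → r ∈ F) :
    DirectSum.toModule R ℤ N φ z = ∑ r ∈ F, φ r (z r) := by
  classical
  have h1 : ∑ r ∈ F, DirectSum.lof R ℤ (fun r => ↥(Fil r)) r (z r) = z := by
    conv_rhs => rw [← DirectSum.sum_support_of (x := z)]
    simp only [DirectSum.lof_eq_of]
    exact (Finset.sum_subset (fun r hr => hF r (DFinsupp.mem_support_iff.mp hr))
      (fun r _ hr => by rw [DFinsupp.notMem_support_iff.mp hr, map_zero])).symm
  conv_lhs => rw [← h1]
  rw [map_sum]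
  simp [DirectSum.toModule_lof]

lemma key (hanti : Antitone Fil)
    (htf : ∀ (r : ℤ) (x : M), x ∈ Fil r → p • x ∈ Fil (r + 1) → x ∈ Fil (r + 1))
    (n : ℕ) :
    ∀ (s : ℤ) (z : ⨁ r : ℤ, ↥(Fil r)),
      (∀ r : ℤ, r < s - n → z r = 0) → (∀ r : ℤ, s < r → z r = 0) →
      (∑ r ∈ Finset.Icc (s - (n : ℤ)) s, p ^ (s - r).toNat • (z r : M)) = 0 →
      z ∈ filtColimRel R M p Fil := by
  induction n with
  | zero =>
    intro s z hlow hhigh hsum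
    simp only [Nat.cast_zero, sub_zero, Finset.Icc_self, Finset.sum_singleton, sub_self,
      Int.toNat_zero, pow_zero, one_smul] at hsum
    have hz : z = 0 := by
      apply DFinsupp.ext
      intro r
      rcases lt_trichotomy r s with h | rfl | h
      · simpa using hlow r (by simpa using h)
      · simpa using ZeroMemClass.coe_eq_zero.mp hsum
      · simpa using hhigh r h
    rw [hz]; exact zero_mem _
  | succ n ih =>
    intro s z hlow hhigh hsum
    classical
    push_cast at hlow hsum
    set y : M := ∑ r ∈ Finset.Icc (s - ((n : ℤ) + 1)) (s - 1),
      p ^ (s - 1 - r).toNat • (z r : M) with hy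
    have hsub : Finset.Icc (s - ((n : ℤ) + 1)) s
        = insert s (Finset.Icc (s - ((n : ℤ) + 1)) (s - 1)) := by
      ext t; simp only [Finset.mem_Icc, Finset.mem_insert]; omega
    have hnotmem : s ∉ Finset.Icc (s - ((n : ℤ) + 1)) (s - 1) := by
      simp only [Finset.mem_Icc]; omega
    have hterm : ∀ r ∈ Finset.Icc (s - ((n : ℤ) + 1)) (s - 1),
        p ^ (s - r).toNat • (z r : M) = p • (p ^ (s - 1 - r).toNat • (z r : M)) := by
      intro r hr
      rw [Finset.mem_Icc] at hr
      have h1 : (s - r).toNat = (s - 1 - r).toNat + 1 := by omega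
      rw [h1, pow_succ, mul_comm, mul_smul]
    have hpy : (z s : M) + p • y = 0 := by
      have hc := Finset.sum_congr rfl hterm
      rw [hsub, Finset.sum_insert hnotmem, sub_self, Int.toNat_zero, pow_zero, one_smul,
        hc] at hsum
      rwa [hy, Finset.smul_sum]
    have hyl : y ∈ Fil (s - ((n : ℤ) + 1)) :=
      Submodule.sum_mem _ (fun r hr => Submodule.smul_mem _ _
        (hanti (by rw [Finset.mem_Icc] at hr; omega) (z r).2))
    have hpys : p • y ∈ Fil s := by
      have h2 : p • y = -(z s : M) := eq_neg_of_add_eq_zero_right hpy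
      rw [h2]; exact neg_mem (z s).2
    have hys : y ∈ Fil s := chain_mem p Fil hanti htf (by omega) hyl hpys
    have hys1 : y ∈ Fil (s - 1) := hanti (by omega) hys
    set g := DirectSum.lof R ℤ (fun r => ↥(Fil r)) s ⟨p • y, hpys⟩ -
      DirectSum.lof R ℤ (fun r => ↥(Fil r)) (s - 1) ⟨y, hys1⟩ with hg
    have hgrel : g ∈ filtColimRel R M p Fil :=
      Submodule.subset_span ⟨s, y, hys, hys1, hpys, rfl⟩
    have hg0 : ∀ r : ℤ, r ≠ s → r ≠ s - 1 → g r = 0 := by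
      intro r h1 h2
      rw [hg, DirectSum.sub_apply, DirectSum.lof_eq_of, DirectSum.lof_eq_of,
        DirectSum.of_eq_of_ne _ _ _ h1,
        DirectSum.of_eq_of_ne _ _ _ h2, sub_zero]
    have hgs : g s = ⟨p • y, hpys⟩ := by
      rw [hg, DirectSum.sub_apply, DirectSum.lof_eq_of, DirectSum.lof_eq_of,
        DirectSum.of_eq_same, DirectSum.of_eq_of_ne _ _ _ (by omega), sub_zero]
    have hgs1 : g (s - 1) = -⟨y, hys1⟩ := by
      rw [hg, DirectSum.sub_apply, DirectSum.lof_eq_of, DirectSum.lof_eq_of,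
        DirectSum.of_eq_same, DirectSum.of_eq_of_ne _ _ _ (by omega), zero_sub]
    have hzgs : (z + g) s = 0 := by
      rw [DirectSum.add_apply, hgs]
      apply ZeroMemClass.coe_eq_zero.mp
      push_cast
      exact hpy
    have hzgs1 : ((z + g) (s - 1) : M) = (z (s - 1) : M) - y := by
      rw [DirectSum.add_apply, hgs1]
      push_cast
      abel
    have hmain : (z + g) ∈ filtColimRel R M p Fil := by
      apply ih (s - 1) (z + g)
      · intro r hr
        rw [DirectSum.add_apply, hg0 r (by omega) (by omega), hlow r (by omega), add_zero]
      · intro r hr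
        rcases eq_or_lt_of_le (by omega : s ≤ r) with rfl | h
        · exact hzgs
        · rw [DirectSum.add_apply, hg0 r (by omega) (by omega), hhigh r h, add_zero]
      · have hsub2 : Finset.Icc (s - 1 - (n : ℤ)) (s - 1)
            = insert (s - 1) (Finset.Icc (s - 1 - (n : ℤ)) (s - 2)) := by
          ext t; simp only [Finset.mem_Icc, Finset.mem_insert]; omega
        have hnm2 : (s - 1) ∉ Finset.Icc (s - 1 - (n : ℤ)) (s - 2) := by
          simp only [Finset.mem_Icc]; omega
        rw [hsub2, Finset.sum_insert hnm2, sub_self, Int.toNat_zero, pow_zero, one_smul, hzgs1]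
        have hzg : ∀ r ∈ Finset.Icc (s - 1 - (n : ℤ)) (s - 2),
            p ^ (s - 1 - r).toNat • ((z + g) r : M) = p ^ (s - 1 - r).toNat • (z r : M) := by
          intro r hr; rw [Finset.mem_Icc] at hr
          rw [DirectSum.add_apply, hg0 r (by omega) (by omega), add_zero]
        rw [Finset.sum_congr rfl hzg]
        have hsub3 : Finset.Icc (s - ((n : ℤ) + 1)) (s - 1)
            = insert (s - 1) (Finset.Icc (s - 1 - (n : ℤ)) (s - 2)) := by
          ext t; simp only [Finset.mem_Icc, Finset.mem_insert]; omega
        have hyeq : y = (z (s - 1) : M) + ∑ r ∈ Finset.Icc (s - 1 - (n : ℤ)) (s - 2),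
            p ^ (s - 1 - r).toNat • (z r : M) := by
          rw [hy, hsub3, Finset.sum_insert hnm2, sub_self, Int.toNat_zero, pow_zero, one_smul]
        rw [hyeq]; abel
    have hz : z = (z + g) - g := by abel
    rw [hz]
    exact sub_mem hmain hgrel

end Aux3

section Aux4

variable {R : Type*} [CommRing R] {M : Type*} [AddCommGroup M] [Module R M]
  (p : R) (Fil : ℤ → Submodule R M)

lemma ker_le_rel (hanti : Antitone Fil) (htop : ∀ r : ℤ, r ≤ 0 → Fil r = ⊤)
    (hbot : ∃ b : ℤ, ∀ r ≥ b, Fil r = ⊥)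
    (htf : ∀ (r : ℤ) (x : M), x ∈ Fil r → p • x ∈ Fil (r + 1) → x ∈ Fil (r + 1))
    (z : ⨁ r : ℤ, ↥(Fil r)) (hz : filtSumToLoc R M p Fil z = 0) :
    z ∈ filtColimRel R M p Fil := by
  classical
  obtain ⟨b, hb⟩ := hbot
  set s : ℤ := max b 0 with hs
  have hhigh : ∀ r : ℤ, s < r → z r = 0 := by
    intro r hr
    have h1 : (z r : M) ∈ (⊥ : Submodule R M) := by
      rw [← hb r (by omega)]; exact (z r).2
    exact ZeroMemClass.coe_eq_zero.mp (by simpa using h1)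
  obtain ⟨m, hm⟩ : ∃ m : ℤ, ∀ r : ℤ, r < m → z r = 0 := by
    rcases (DFinsupp.support z).eq_empty_or_nonempty with he | hne
    · exact ⟨0, fun r _ => by
        by_contra hzr
        exact absurd (DFinsupp.mem_support_iff.mpr hzr) (by simp [he])⟩
    · refine ⟨(DFinsupp.support z).min' hne, fun r hr => ?_⟩
      by_contra hzr
      exact absurd (Finset.min'_le _ r (DFinsupp.mem_support_iff.mpr hzr)) (by omega)
  set m' : ℤ := min m s with hm'
  set n : ℕ := (s - m').toNat with hn
  have hsn : s - (n : ℤ) = m' := by omega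
  have hsupp : ∀ r : ℤ, z r ≠ 0 → r ∈ Finset.Icc (s - (n : ℤ)) s := by
    intro r hzr
    rw [Finset.mem_Icc, hsn]
    constructor
    · by_contra h; exact hzr (hm r (by omega))
    · by_contra h; exact hzr (hhigh r (by omega))
  have hsum : (∑ r ∈ Finset.Icc (s - (n : ℤ)) s, p ^ (s - r).toNat • (z r : M)) = 0 := by
    have h2 : filtSumToLoc R M p Fil z
        = ∑ r ∈ Finset.Icc (s - (n : ℤ)) s, filtToLoc R M p Fil r (z r) :=
      toModule_eq_sum Fil _ z _ hsupp
    have h3 : p ^ s.toNat • filtSumToLoc R M p Fil z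
        = ∑ r ∈ Finset.Icc (s - (n : ℤ)) s,
            LocalizedModule.mk (S := Submonoid.powers p) (p ^ (s - r).toNat • (z r : M)) 1 := by
      rw [h2, Finset.smul_sum]
      exact Finset.sum_congr rfl fun r hr => by
        rw [Finset.mem_Icc] at hr; exact scaled p Fil r s hr.2 (by omega) (z r)
    have h4 : LocalizedModule.mk (S := Submonoid.powers p)
        (∑ r ∈ Finset.Icc (s - (n : ℤ)) s, p ^ (s - r).toNat • (z r : M)) 1 = 0 := by
      rw [← LocalizedModule.mkLinearMap_apply, map_sum]
      simp_rw [LocalizedModule.mkLinearMap_apply]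
      rw [← h3, hz, smul_zero]
    exact mk_inj p Fil hanti htop ⟨b, hb⟩ htf _ h4
  exact key p Fil hanti htf n s z (fun r hr => hm r (by omega)) hhigh hsum

lemma gen_eq (r : ℤ) (x : M) (hx' : x ∈ Fil (r - 1)) (hpx : p • x ∈ Fil r) :
    filtToLoc R M p Fil r ⟨p • x, hpx⟩ = filtToLoc R M p Fil (r - 1) ⟨x, hx'⟩ := by
  rw [filtToLoc_apply, filtToLoc_apply, LocalizedModule.smul'_mk, LocalizedModule.smul'_mk,
    LocalizedModule.mk_eq]
  refine ⟨1, ?_⟩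
  simp only [one_smul, Submonoid.smul_def, Submonoid.mk_smul, smul_smul, mul_assoc,
    ← pow_succ, ← pow_add]
  congr 2
  omega

end Aux4

set_option maxHeartbeats 1000000 in
/-- With `Fil^•` as before and each graded piece `Gr^r(Fil^•)` `p`-torsion-free, the
natural map `F̃ → M[1/p]` (given on the copy of `Fil^r` by `x ↦ p^{-r} x`) is injective,
with image `∑_{r} p^{-r} Fil^r ⊆ M[1/p]`. -/
theorem stmt_6 (R : Type*) [CommRing R] (p : R) (hp : p ∈ nonZeroDivisors R)
    (M : Type*) [AddCommGroup M] [Module R M] [Module.Finite R M]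
    (Fil : ℤ → Submodule R M) (hanti : Antitone Fil)
    (htop : ∀ r : ℤ, r ≤ 0 → Fil r = ⊤) (hbot : ∃ b : ℤ, ∀ r ≥ b, Fil r = ⊥)
    (htf : ∀ (r : ℤ) (x : M), x ∈ Fil r → p • x ∈ Fil (r + 1) → x ∈ Fil (r + 1)) :
    filtColimRel R M p Fil ≤ LinearMap.ker (filtSumToLoc R M p Fil) ∧
    ∀ h : filtColimRel R M p Fil ≤ LinearMap.ker (filtSumToLoc R M p Fil),
      Function.Injective ((filtColimRel R M p Fil).liftQ (filtSumToLoc R M p Fil) h) ∧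
      LinearMap.range ((filtColimRel R M p Fil).liftQ (filtSumToLoc R M p Fil) h) =
        ⨆ r : ℤ, LinearMap.range (filtToLoc R M p Fil r) := by
  have hdef : filtSumToLoc R M p Fil = DirectSum.toModule R ℤ _ (filtToLoc R M p Fil) := rfl
  constructor
  · rw [filtColimRel, Submodule.span_le]
    rintro w ⟨r, x, hx, hx', hpx, rfl⟩
    simp only [SetLike.mem_coe, LinearMap.mem_ker, map_sub]
    rw [hdef, DirectSum.toModule_lof, DirectSum.toModule_lof, sub_eq_zero]
    exact gen_eq p Fil r x hx' hpx
  · intro h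
    constructor
    · exact LinearMap.ker_eq_bot.mp (Submodule.ker_liftQ_eq_bot
        (filtColimRel R M p Fil) (filtSumToLoc R M p Fil) h
        (fun z hz => ker_le_rel p Fil hanti htop hbot htf z (LinearMap.mem_ker.mp hz)))
    · rw [Submodule.range_liftQ]
      apply le_antisymm
      · rintro w ⟨u, rfl⟩
        induction u using DirectSum.induction_on with
        | zero => rw [map_zero]; exact zero_mem _
        | of i x =>
            rw [hdef, ← DirectSum.lof_eq_of R, DirectSum.toModule_lof]
            exact le_iSup (fun r => LinearMap.range (filtToLoc R M p Fil r)) i ⟨x, rfl⟩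
        | add a b ha hb => rw [map_add]; exact add_mem ha hb
      · refine iSup_le fun r => ?_
        rintro w ⟨x, rfl⟩
        exact ⟨DirectSum.lof R ℤ _ r x, by rw [hdef, DirectSum.toModule_lof]⟩
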